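/- Let q be a power of a prime p and let C be a field that is an F_q-algebra, carrying a multiplicative nonarchimedean absolute value |·| with respect to which C is complete. Let α : ℕ → C satisfy α_0 = 1, |α_i| < |α_{i+1}| for all i, and |α_i| → ∞ (so in particular |α_1| > 1). Then for every integer n ≥ 1, the sum ẑ(q^n − 1) := ∑_{i ≥ 1} ∑_{(c_0, …, c_{i−1}) ∈ F_q^i} (c_0α_0 + c_1α_1 + ⋯ + c_{i−1}α_{i−1} + α_i)^{1 − q^n} satisfies |ẑ(q^n − 1)| = |α_1|^{q^n (1 − q)}, and in particular |ẑ(q^n − 1)| < 1. -/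

import Mathlib

open Polynomial

section PolyAux

variable (Fq : Type*) [Field Fq] [Fintype Fq]

lemma auxProdFq : ∏ a : Fq, (X - C a) = X ^ (Fintype.card Fq) - X := by
  classical
  have hcard : (1 : ℕ) < Fintype.card Fq := Fintype.one_lt_card
  have h1 : (X ^ Fintype.card Fq - X : Fq[X]).Monic :=
    Polynomial.monic_X_pow_sub (by rw [Polynomial.degree_X]; exact_mod_cast hcard)
  have h2 : Multiset.card (X ^ Fintype.card Fq - X : Fq[X]).roots
      = (X ^ Fintype.card Fq - X : Fq[X]).natDegree := by
    rw [FiniteField.roots_X_pow_card_sub_X,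
      FiniteField.X_pow_card_sub_X_natDegree_eq Fq hcard]
    simp [Finset.card_univ]
  have h3 := Polynomial.prod_multiset_X_sub_C_of_monic_of_roots_card_eq h1 h2
  rw [FiniteField.roots_X_pow_card_sub_X] at h3
  rw [Finset.prod_eq_multiset_prod]
  exact h3

variable {Cc : Type*} [Field Cc] [Algebra Fq Cc]

lemma auxProdPoly :
    ∏ c : Fq, ((X : Cc[X]) - C (algebraMap Fq Cc c)) = X ^ (Fintype.card Fq) - X := by
  have h1 : ∏ c : Fq, ((X : Cc[X]) - C (algebraMap Fq Cc c))
      = Polynomial.map (algebraMap Fq Cc) (∏ a : Fq, (X - C a)) := by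
    rw [Polynomial.map_prod]
    simp
  rw [h1, auxProdFq Fq]
  simp

lemma auxProdC (Y : Cc) :
    ∏ c : Fq, (Y - algebraMap Fq Cc c) = Y ^ (Fintype.card Fq) - Y := by
  have := congrArg (Polynomial.eval Y) (auxProdPoly Fq (Cc := Cc))
  simpa [Polynomial.eval_prod] using this

lemma auxCardZero : ((Fintype.card Fq : ℕ) : Cc) = 0 := by
  have h1 : ((Fintype.card Fq : ℕ) : Fq) = 0 := FiniteField.cast_card_eq_zero Fq
  have h2 := congrArg (algebraMap Fq Cc) h1
  rw [map_natCast, map_zero] at h2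
  exact h2

lemma auxDerC [DecidableEq Fq] (Y : Cc) :
    ∑ c : Fq, ∏ a ∈ Finset.univ.erase c, (Y - algebraMap Fq Cc a) = -1 := by
  classical
  have h1 : derivative (∏ c : Fq, ((X : Cc[X]) - C (algebraMap Fq Cc c)))
      = ∑ c : Fq, ∏ a ∈ Finset.univ.erase c, ((X : Cc[X]) - C (algebraMap Fq Cc a)) := by
    rw [Finset.prod_eq_multiset_prod, Polynomial.derivative_prod]
    rw [← Finset.sum_eq_multiset_sum]
    refine Finset.sum_congr rfl fun c _ => ?_
    rw [derivative_X_sub_C, mul_one, ← Finset.erase_val, ← Finset.prod_eq_multiset_prod]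
  rw [auxProdPoly Fq] at h1
  have h2 : derivative ((X : Cc[X]) ^ (Fintype.card Fq) - X) = -1 := by
    rw [derivative_sub, derivative_X_pow, derivative_X, auxCardZero Fq]
    simp
  rw [h2] at h1
  have h3 := congrArg (Polynomial.eval Y) h1.symm
  simpa [Polynomial.eval_finset_sum, Polynomial.eval_prod] using h3

lemma auxInv [DecidableEq Fq] (Y : Cc) (hY : ∀ c : Fq, Y - algebraMap Fq Cc c ≠ 0) :
    ∑ c : Fq, (Y - algebraMap Fq Cc c)⁻¹ = -(Y ^ (Fintype.card Fq) - Y)⁻¹ := by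
  classical
  have hD : (∏ a : Fq, (Y - algebraMap Fq Cc a)) ≠ 0 :=
    Finset.prod_ne_zero_iff.mpr fun c _ => hY c
  have h1 : ∀ c : Fq, (Y - algebraMap Fq Cc c)⁻¹
      = (∏ a ∈ Finset.univ.erase c, (Y - algebraMap Fq Cc a))
        * (∏ a : Fq, (Y - algebraMap Fq Cc a))⁻¹ := by
    intro c
    rw [← Finset.mul_prod_erase Finset.univ _ (Finset.mem_univ c), mul_inv,
      ← mul_assoc]
    have hE : (∏ a ∈ Finset.univ.erase c, (Y - algebraMap Fq Cc a)) ≠ 0 :=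
      Finset.prod_ne_zero_iff.mpr fun a _ => hY a
    rw [mul_comm _ (Y - algebraMap Fq Cc c)⁻¹, mul_assoc, mul_inv_cancel₀ hE, mul_one]
  calc ∑ c : Fq, (Y - algebraMap Fq Cc c)⁻¹
      = (∑ c : Fq, ∏ a ∈ Finset.univ.erase c, (Y - algebraMap Fq Cc a))
        * (∏ a : Fq, (Y - algebraMap Fq Cc a))⁻¹ := by
        rw [Finset.sum_mul]; exact Finset.sum_congr rfl fun c _ => h1 c
    _ = -(Y ^ (Fintype.card Fq) - Y)⁻¹ := by
        rw [auxDerC Fq, auxProdC Fq]; ring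

lemma auxFrob (m : ℕ) (x y : Cc) :
    (x - y) ^ (Fintype.card Fq) ^ m
      = x ^ (Fintype.card Fq) ^ m - y ^ (Fintype.card Fq) ^ m := by
  obtain ⟨k, hp, hcard⟩ := FiniteField.card Fq (ringChar Fq)
  haveI : Fact (ringChar Fq).Prime := ⟨hp⟩
  haveI : CharP Fq (ringChar Fq) := ringChar.charP Fq
  haveI : ExpChar Fq (ringChar Fq) := inferInstance
  haveI : ExpChar Cc (ringChar Fq) :=
    expChar_of_injective_algebraMap (algebraMap Fq Cc).injective _
  rw [hcard, ← pow_mul]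
  exact sub_pow_expChar_pow ..

lemma keySum (n : ℕ) (y : Cc)
    (hy : ∀ c : Fq, y - algebraMap Fq Cc c ≠ 0)
    (hY : ∀ c : Fq, y ^ (Fintype.card Fq) ^ n - algebraMap Fq Cc c ≠ 0) :
    ∑ c : Fq, (y - algebraMap Fq Cc c) ^ (1 - (Fintype.card Fq : ℤ) ^ n)
      = (y ^ (Fintype.card Fq) ^ n - y)
        / ((y ^ (Fintype.card Fq) ^ n) ^ (Fintype.card Fq) - y ^ (Fintype.card Fq) ^ n) := by
  classical
  set Y : Cc := y ^ (Fintype.card Fq) ^ n with hYdef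
  have hexp : (1 - (Fintype.card Fq : ℤ) ^ n) = 1 - (((Fintype.card Fq) ^ n : ℕ) : ℤ) := by
    push_cast; ring
  have h1 : ∀ c : Fq, (y - algebraMap Fq Cc c) ^ (1 - (Fintype.card Fq : ℤ) ^ n)
      = 1 + (y - Y) * (Y - algebraMap Fq Cc c)⁻¹ := by
    intro c
    have hfr : (y - algebraMap Fq Cc c) ^ ((Fintype.card Fq) ^ n) = Y - algebraMap Fq Cc c := by
      rw [auxFrob Fq n, ← map_pow, FiniteField.pow_card_pow]
    rw [hexp, zpow_sub₀ (hy c), zpow_one, zpow_natCast, hfr, div_eq_mul_inv]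
    have h2 : y - algebraMap Fq Cc c = (Y - algebraMap Fq Cc c) + (y - Y) := by ring
    rw [h2, add_mul, mul_inv_cancel₀ (hY c)]
  rw [Finset.sum_congr rfl fun c _ => h1 c]
  rw [Finset.sum_add_distrib, ← Finset.mul_sum, auxInv Fq Y hY]
  rw [Finset.sum_const, Finset.card_univ, nsmul_eq_mul, mul_one, auxCardZero Fq]
  rw [div_eq_mul_inv]
  ring

end PolyAux

def sigEquiv (Fq : Type*) : (Σ j : Σ i : ℕ, Fin i → Fq, Fq) ≃ (Σ i : ℕ, Fin (i + 1) → Fq) where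
  toFun x := ⟨x.1.1, Fin.cons x.2 x.1.2⟩
  invFun p := ⟨⟨p.1, Fin.tail p.2⟩, p.2 0⟩
  left_inv := by rintro ⟨⟨i, d⟩, c⟩; simp
  right_inv := by rintro ⟨i, c⟩; simp

set_option maxHeartbeats 1000000 in
theorem stmt4 (Fq C : Type*) [Field Fq] [Fintype Fq] [NormedField C] [CompleteSpace C]
    [Algebra Fq C]
    (q : ℕ) (hq : q = Fintype.card Fq)
    (hna : IsNonarchimedean (fun x : C => ‖x‖))
    (α : ℕ → C) (hα0 : α 0 = 1)
    (hmono : ∀ i : ℕ, ‖α i‖ < ‖α (i + 1)‖)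
    (htend : Filter.Tendsto (fun i : ℕ => ‖α i‖) Filter.atTop Filter.atTop)
    (n : ℕ) (hn : 1 ≤ n) :
    ‖∑' p : Σ i : ℕ, Fin (i + 1) → Fq,
        (∑ j : Fin (p.1 + 1), algebraMap Fq C (p.2 j) * α (j : ℕ) + α (p.1 + 1))
          ^ (1 - (q : ℤ) ^ n)‖ = ‖α 1‖ ^ ((q : ℤ) ^ n * (1 - (q : ℤ))) ∧
      ‖∑' p : Σ i : ℕ, Fin (i + 1) → Fq,
        (∑ j : Fin (p.1 + 1), algebraMap Fq C (p.2 j) * α (j : ℕ) + α (p.1 + 1))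
          ^ (1 - (q : ℤ) ^ n)‖ < 1 := by
  classical
  subst hq
  haveI : IsUltrametricDist C :=
    IsUltrametricDist.isUltrametricDist_of_isNonarchimedean_norm hna
  set Q : ℕ := Fintype.card Fq with hQdef
  have hQ2 : 2 ≤ Q := Fintype.one_lt_card
  have hQn2 : 2 ≤ Q ^ n := le_trans hQ2 (Nat.le_self_pow (by omega) _)
  have hE0le : Q ^ n ≤ Q ^ (n + 1) := Nat.pow_le_pow_right (by omega) (by omega)
  have hE0lt : Q ^ n < Q ^ (n + 1) := Nat.pow_lt_pow_right (by omega) (by omega)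
  set E0 : ℕ := Q ^ (n + 1) - Q ^ n with hE0def
  have hE0pos : 0 < E0 := by omega
  have smono : StrictMono fun i : ℕ => ‖α i‖ := strictMono_nat_of_lt_succ hmono
  have ht1 : 1 < ‖α 1‖ := by
    have h := hmono 0
    rwa [hα0, norm_one] at h
  have hb1 : ∀ i : ℕ, 1 < ‖α (i + 1)‖ := fun i =>
    lt_of_lt_of_le ht1 (smono.monotone (by omega))
  have hb0 : ∀ i : ℕ, (0 : ℝ) < ‖α (i + 1)‖ := fun i => lt_trans one_pos (hb1 i)
  have hι : ∀ c : Fq, ‖algebraMap Fq C c‖ ≤ 1 := by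
    intro c
    rcases eq_or_ne c 0 with rfl | hc
    · simp
    · have hne : Q - 1 ≠ 0 := by omega
      have h2 : ‖algebraMap Fq C c‖ ^ (Q - 1) = 1 := by
        rw [← norm_pow, ← map_pow, FiniteField.pow_card_sub_one_eq_one c hc, map_one, norm_one]
      rcases lt_trichotomy ‖algebraMap Fq C c‖ 1 with h | h | h
      · exact h.le
      · exact h.le
      · exact absurd h2 (by have := one_lt_pow₀ h hne; linarith)
  have hadd : ∀ a b : C, ‖b‖ < ‖a‖ → ‖a + b‖ = ‖a‖ := by
    intro a b h
    refine le_antisymm (le_trans (hna a b) (by rw [max_eq_left h.le])) ?_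
    have h2 : ‖a‖ ≤ max ‖a + b‖ ‖b‖ := by
      have h3 := hna (a + b) (-b)
      simpa using h3
    rcases le_max_iff.mp h2 with h3 | h3
    · exact h3
    · exact absurd h3 (not_le.mpr h)
  have hsub : ∀ a b : C, ‖b‖ < ‖a‖ → ‖a - b‖ = ‖a‖ := by
    intro a b h
    rw [sub_eq_add_neg]
    exact hadd a (-b) (by simpa using h)
  set yv : (i : ℕ) → (Fin i → Fq) → C :=
    fun i d => (∑ j : Fin i, algebraMap Fq C (d j) * α ((j : ℕ) + 1)) + α (i + 1) with hyv
  have hynorm : ∀ (i : ℕ) (d : Fin i → Fq), ‖yv i d‖ = ‖α (i + 1)‖ := by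
    intro i d
    have hs : ‖∑ j : Fin i, algebraMap Fq C (d j) * α ((j : ℕ) + 1)‖ < ‖α (i + 1)‖ := by
      refine lt_of_le_of_lt
        (IsUltrametricDist.norm_sum_le_of_forall_le_of_nonneg (norm_nonneg (α i)) ?_) (hmono i)
      intro j _
      calc ‖algebraMap Fq C (d j) * α ((j : ℕ) + 1)‖
          = ‖algebraMap Fq C (d j)‖ * ‖α ((j : ℕ) + 1)‖ := norm_mul _ _
        _ ≤ 1 * ‖α ((j : ℕ) + 1)‖ :=
            mul_le_mul_of_nonneg_right (hι _) (norm_nonneg _)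
        _ = ‖α ((j : ℕ) + 1)‖ := one_mul _
        _ ≤ ‖α i‖ := smono.monotone (by omega)
    show ‖(∑ j : Fin i, algebraMap Fq C (d j) * α ((j : ℕ) + 1)) + α (i + 1)‖ = ‖α (i + 1)‖
    rw [add_comm (∑ j : Fin i, algebraMap Fq C (d j) * α ((j : ℕ) + 1)) (α (i + 1))]
    exact hadd _ _ hs
  have hyι : ∀ (i : ℕ) (d : Fin i → Fq) (c : Fq), ‖algebraMap Fq C c‖ < ‖yv i d‖ :=
    fun i d c => lt_of_le_of_lt (hι c) (by rw [hynorm i d]; exact hb1 i)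
  have hyne : ∀ (i : ℕ) (d : Fin i → Fq) (c : Fq), yv i d - algebraMap Fq C c ≠ 0 := by
    intro i d c h0
    have h1 : ‖yv i d - algebraMap Fq C c‖ = ‖yv i d‖ := hsub _ _ (hyι i d c)
    rw [h0, norm_zero, hynorm i d] at h1
    exact absurd h1.symm (ne_of_gt (hb0 i))
  have hYnorm : ∀ (i : ℕ) (d : Fin i → Fq), ‖yv i d ^ Q ^ n‖ = ‖α (i + 1)‖ ^ Q ^ n := by
    intro i d; rw [norm_pow, hynorm i d]
  have hYne : ∀ (i : ℕ) (d : Fin i → Fq) (c : Fq), yv i d ^ Q ^ n - algebraMap Fq C c ≠ 0 := by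
    intro i d c h0
    have hlt : ‖algebraMap Fq C c‖ < ‖yv i d ^ Q ^ n‖ := by
      rw [hYnorm i d]
      exact lt_of_le_of_lt (hι c) (one_lt_pow₀ (hb1 i) (by omega))
    have h1 : ‖yv i d ^ Q ^ n - algebraMap Fq C c‖ = ‖yv i d ^ Q ^ n‖ := hsub _ _ hlt
    rw [h0, norm_zero, hYnorm i d] at h1
    have : (0 : ℝ) < ‖α (i + 1)‖ ^ Q ^ n := pow_pos (hb0 i) _
    exact absurd h1.symm (ne_of_gt this)
  set F : (Σ i : ℕ, Fin (i + 1) → Fq) → C := fun p =>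
    (∑ j : Fin (p.1 + 1), algebraMap Fq C (p.2 j) * α (j : ℕ) + α (p.1 + 1))
      ^ (1 - (Q : ℤ) ^ n) with hF
  have hdecomp : ∀ (i : ℕ) (c : Fin (i + 1) → Fq),
      (∑ j : Fin (i + 1), algebraMap Fq C (c j) * α (j : ℕ) + α (i + 1))
        = algebraMap Fq C (c 0) + yv i (Fin.tail c) := by
    intro i c
    rw [Fin.sum_univ_succ]
    simp only [Fin.val_zero, hα0, mul_one, Fin.val_succ, hyv]
    rw [add_assoc]
    rfl
  have hbase : ∀ (i : ℕ) (c : Fin (i + 1) → Fq),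
      ‖algebraMap Fq C (c 0) + yv i (Fin.tail c)‖ = ‖α (i + 1)‖ := by
    intro i c
    rw [add_comm]
    rw [hadd _ _ (hyι i (Fin.tail c) (c 0))]
    exact hynorm i (Fin.tail c)
  have hQe : (1 - (Q : ℤ) ^ n) = -((Q ^ n - 1 : ℕ) : ℤ) := by
    rw [Nat.cast_sub (by omega)]
    push_cast
    ring
  have hFnorm : ∀ p : Σ i : ℕ, Fin (i + 1) → Fq,
      ‖F p‖ = (‖α (p.1 + 1)‖ ^ (Q ^ n - 1))⁻¹ := by
    rintro ⟨i, c⟩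
    show ‖(∑ j : Fin (i + 1), algebraMap Fq C (c j) * α (j : ℕ) + α (i + 1))
      ^ (1 - (Q : ℤ) ^ n)‖ = _
    rw [hdecomp i c, norm_zpow, hbase i c, hQe, zpow_neg, zpow_natCast]
  have hFsum : Summable F := by
    apply NonarchimedeanAddGroup.summable_of_tendsto_cofinite_zero
    rw [NormedAddCommGroup.tendsto_nhds_zero]
    intro ε hε
    rw [Filter.eventually_cofinite]
    obtain ⟨M, hM⟩ := Filter.eventually_atTop.mp (htend.eventually_gt_atTop ε⁻¹)
    have hfin : (Set.range (fun x : Σ i : Fin M, (Fin ((i : ℕ) + 1) → Fq) =>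
        (⟨(x.1 : ℕ), x.2⟩ : Σ k : ℕ, Fin (k + 1) → Fq))).Finite := Set.finite_range _
    apply hfin.subset
    rintro ⟨i, c⟩ hp
    simp only [Set.mem_setOf_eq, not_lt] at hp
    have h1 : ‖F ⟨i, c⟩‖ ≤ ‖α (i + 1)‖⁻¹ := by
      rw [hFnorm ⟨i, c⟩]
      have h2 : ‖α (i + 1)‖ ≤ ‖α (i + 1)‖ ^ (Q ^ n - 1) := by
        calc ‖α (i + 1)‖ = ‖α (i + 1)‖ ^ 1 := (pow_one _).symm
          _ ≤ _ := pow_le_pow_right₀ (hb1 _).le (by omega)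
      exact inv_anti₀ (hb0 _) h2
    have h2 : ‖α (i + 1)‖ ≤ ε⁻¹ := by
      have h3 : ε ≤ ‖α (i + 1)‖⁻¹ := le_trans hp h1
      calc ‖α (i + 1)‖ = (‖α (i + 1)‖⁻¹)⁻¹ := (inv_inv _).symm
        _ ≤ ε⁻¹ := inv_anti₀ hε h3
    have h4 : i < M := by
      by_contra hcon
      push_neg at hcon
      exact absurd (hM (i + 1) (by omega)) (not_lt.mpr h2)
    exact ⟨⟨⟨i, h4⟩, c⟩, rfl⟩
  have hFE : Summable (F ∘ (sigEquiv Fq)) := (sigEquiv Fq).summable_iff.mpr hFsum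
  set Fh : (Σ i : ℕ, Fin i → Fq) → C := fun j => ∑ c : Fq, F (sigEquiv Fq ⟨j, c⟩) with hFh
  have hmain : ∑' p, F p = ∑' j : Σ i : ℕ, Fin i → Fq, Fh j :=
    calc ∑' p, F p = ∑' x, (F ∘ (sigEquiv Fq)) x := ((sigEquiv Fq).tsum_eq F).symm
      _ = ∑' j : Σ i : ℕ, Fin i → Fq, ∑' c : Fq, (F ∘ (sigEquiv Fq)) ⟨j, c⟩ := hFE.tsum_sigma
      _ = ∑' j : Σ i : ℕ, Fin i → Fq, Fh j := tsum_congr fun j => tsum_fintype _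
  have hclosed : ∀ (i : ℕ) (d : Fin i → Fq), Fh ⟨i, d⟩ =
      (yv i d ^ Q ^ n - yv i d) / ((yv i d ^ Q ^ n) ^ Q - yv i d ^ Q ^ n) := by
    intro i d
    have h1 : Fh ⟨i, d⟩ = ∑ c : Fq, (yv i d - algebraMap Fq C c) ^ (1 - (Q : ℤ) ^ n) := by
      rw [hFh]
      refine Fintype.sum_equiv (Equiv.neg Fq) _ _ ?_
      intro c
      show F ⟨i, Fin.cons c d⟩ = _
      have h2 : F ⟨i, Fin.cons c d⟩ =
          (algebraMap Fq C ((Fin.cons c d : Fin (i + 1) → Fq) 0)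
            + yv i (Fin.tail (Fin.cons c d : Fin (i + 1) → Fq)))
            ^ (1 - (Q : ℤ) ^ n) := by
        rw [hF]
        exact congrArg (· ^ (1 - (Q : ℤ) ^ n)) (hdecomp i (Fin.cons c d))
      rw [h2]
      simp only [Fin.cons_zero, Fin.tail_cons, Equiv.neg_apply, map_neg]
      rw [sub_neg_eq_add, add_comm]
    rw [h1]
    exact keySum Fq n (yv i d) (hyne i d) (hYne i d)
  have hnormclosed : ∀ (i : ℕ) (d : Fin i → Fq),
      ‖Fh ⟨i, d⟩‖ = (‖α (i + 1)‖ ^ E0)⁻¹ := by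
    intro i d
    rw [hclosed i d, norm_div]
    have hb : 1 < ‖α (i + 1)‖ := hb1 i
    have hlt1 : ‖yv i d‖ < ‖yv i d ^ Q ^ n‖ := by
      rw [hYnorm i d, hynorm i d]
      calc ‖α (i + 1)‖ = ‖α (i + 1)‖ ^ 1 := (pow_one _).symm
        _ < ‖α (i + 1)‖ ^ Q ^ n := pow_lt_pow_right₀ hb (by omega)
    have h1 : ‖yv i d ^ Q ^ n - yv i d‖ = ‖α (i + 1)‖ ^ Q ^ n := by
      rw [hsub _ _ hlt1, hYnorm i d]
    have hlt2 : ‖yv i d ^ Q ^ n‖ < ‖(yv i d ^ Q ^ n) ^ Q‖ := by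
      have e1 : ‖(yv i d ^ Q ^ n) ^ Q‖ = (‖α (i + 1)‖ ^ Q ^ n) ^ Q := by
        rw [norm_pow (yv i d ^ Q ^ n) Q, hYnorm i d]
      rw [e1, hYnorm i d]
      calc ‖α (i + 1)‖ ^ Q ^ n = (‖α (i + 1)‖ ^ Q ^ n) ^ 1 := (pow_one _).symm
        _ < (‖α (i + 1)‖ ^ Q ^ n) ^ Q :=
          pow_lt_pow_right₀ (one_lt_pow₀ hb (by omega)) (by omega)
    have h2 : ‖(yv i d ^ Q ^ n) ^ Q - yv i d ^ Q ^ n‖ = ‖α (i + 1)‖ ^ Q ^ (n + 1) := by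
      rw [hsub _ _ hlt2, norm_pow, norm_pow, hynorm i d, ← pow_mul, ← pow_succ]
    rw [h1, h2]
    have hQsum : Q ^ (n + 1) = Q ^ n + E0 := (Nat.add_sub_cancel' hE0le).symm
    have hbne : ‖α (i + 1)‖ ^ Q ^ n ≠ 0 := by positivity
    rw [hQsum, pow_add, div_mul_eq_div_div, div_self hbne, one_div]
  have hFhsum : Summable Fh :=
    (hFE.sigma).congr fun j => tsum_fintype _
  set j₀ : Σ i : ℕ, Fin i → Fq := ⟨0, fun x => x.elim0⟩ with hj₀
  have hj0norm : ‖Fh j₀‖ = (‖α 1‖ ^ E0)⁻¹ := hnormclosed 0 _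
  have hj0uniq : ∀ j : Σ i : ℕ, Fin i → Fq, j ≠ j₀ → 1 ≤ j.1 := by
    rintro ⟨i, d⟩ hne
    by_contra h
    push_neg at h
    have h' : i < 1 := h
    have hi : i = 0 := by omega
    subst hi
    exact hne (congrArg (Sigma.mk 0) (funext fun x => x.elim0))
  have hrest : ‖∑' j : Σ i : ℕ, Fin i → Fq, ite (j = j₀) 0 (Fh j)‖ ≤ (‖α 2‖ ^ E0)⁻¹ := by
    apply IsUltrametricDist.norm_tsum_le_of_forall_le_of_nonneg (by positivity)
    intro j
    by_cases hj : j = j₀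
    · rw [if_pos hj, norm_zero]
      positivity
    · rw [if_neg hj]
      rcases j with ⟨i, d⟩
      rw [hnormclosed i d]
      have h1 : 1 ≤ i := hj0uniq ⟨i, d⟩ hj
      have h2 : ‖α 2‖ ≤ ‖α (i + 1)‖ := smono.monotone (by omega)
      exact inv_anti₀ (pow_pos (hb0 1) E0) (pow_le_pow_left₀ (norm_nonneg _) h2 _)
  have hrestlt : (‖α 2‖ ^ E0)⁻¹ < (‖α 1‖ ^ E0)⁻¹ := by
    apply inv_strictAnti₀ (pow_pos (lt_trans one_pos ht1) E0)
    exact pow_lt_pow_left₀ (hmono 1) (norm_nonneg _) (by omega)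
  have hsum_eq : ‖∑' p, F p‖ = (‖α 1‖ ^ E0)⁻¹ := by
    rw [hmain, hFhsum.tsum_eq_add_tsum_ite j₀]
    rw [hadd _ _ (by rw [hj0norm]; exact lt_of_le_of_lt hrest hrestlt)]
    exact hj0norm
  have hRHS : ‖α 1‖ ^ ((Q : ℤ) ^ n * (1 - (Q : ℤ))) = (‖α 1‖ ^ E0)⁻¹ := by
    have hcast : (Q : ℤ) ^ n * (1 - (Q : ℤ)) = -((E0 : ℕ) : ℤ) := by
      rw [hE0def, Nat.cast_sub hE0le]
      push_cast
      ring
    rw [hcast, zpow_neg, zpow_natCast]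
  refine ⟨?_, ?_⟩
  · rw [hsum_eq, hRHS]
  · rw [hsum_eq]
    have hone : 1 < ‖α 1‖ ^ E0 := one_lt_pow₀ ht1 (by omega)
    exact inv_lt_one_of_one_lt₀ hone
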